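/- Let U_1, …, U_L be unitaries on a Hilbert space V and let H_prop = Σ_{t=1}^L H_t with H_t = (1/2)(−U_t ⊗ |t⟩⟨t−1| − U_t† ⊗ |t−1⟩⟨t| + I ⊗ |t⟩⟨t| + I ⊗ |t−1⟩⟨t−1|) acting on V ⊗ ℂ^{L+1}. Then for every unit vector ξ ∈ V, the history state |ψ_hist⟩ = (L+1)^{−1/2} Σ_{t=0}^L (U_t ⋯ U_1 ξ) ⊗ |t⟩ satisfies H_prop |ψ_hist⟩ = 0, where U_0 ⋯ U_1 ξ means ξ for t = 0. -/

import Mathlib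

open Matrix Kronecker

variable {ι : Type*} [Fintype ι] [DecidableEq ι]

/-- The Feynman–Kitaev propagation term
`H_t = ½(−U_t ⊗ |t⟩⟨t−1| − U_t† ⊗ |t−1⟩⟨t| + I ⊗ |t⟩⟨t| + I ⊗ |t−1⟩⟨t−1|)`
on `V ⊗ ℂ^{L+1}`, where `t = i.succ` and `t − 1 = i.castSucc` for `i : Fin L`. -/
noncomputable def FKterm (L : ℕ) (U : Matrix ι ι ℂ) (i : Fin L) :
    Matrix (ι × Fin (L + 1)) (ι × Fin (L + 1)) ℂ :=
  ((2 : ℂ)⁻¹) •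
    (-(U ⊗ₖ Matrix.single i.succ i.castSucc (1 : ℂ))
      - (Uᴴ ⊗ₖ Matrix.single i.castSucc i.succ (1 : ℂ))
      + ((1 : Matrix ι ι ℂ) ⊗ₖ Matrix.single i.succ i.succ (1 : ℂ))
      + ((1 : Matrix ι ι ℂ) ⊗ₖ Matrix.single i.castSucc i.castSucc (1 : ℂ)))

/-- The partial circuit output `U_t ⋯ U_1 ξ` (equal to `ξ` for `t = 0`). -/
noncomputable def partialOutput (L : ℕ) (U : Fin L → Matrix ι ι ℂ) (ξ : ι → ℂ) :
    ℕ → (ι → ℂ)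
  | 0 => ξ
  | t + 1 =>
      if h : t < L then (U ⟨t, h⟩).mulVec (partialOutput L U ξ t)
      else partialOutput L U ξ t

lemma kron_std_mulVec {n : ℕ} (A : Matrix ι ι ℂ) (a b : Fin n) (v : ι × Fin n → ℂ)
    (x : ι) (t : Fin n) :
    ((A ⊗ₖ Matrix.single a b (1 : ℂ)).mulVec v) (x, t) =
      if t = a then A.mulVec (fun y => v (y, b)) x else 0 := by
  classical
  simp only [mulVec, dotProduct, Fintype.sum_prod_type, kroneckerMap_apply,
    Matrix.single, Matrix.of_apply]
  by_cases h : t = a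
  · subst h
    simp [mulVec, dotProduct, Finset.mul_sum, mul_comm]
  · simp [Ne.symm h, h]

lemma sum_mulVec' {α n : Type*} [Fintype α] [Fintype n] (M : α → Matrix n n ℂ)
    (v : n → ℂ) : (∑ i, M i).mulVec v = ∑ i, (M i).mulVec v := by
  funext x
  simp only [mulVec, dotProduct, Finset.sum_apply, Matrix.sum_apply, Finset.sum_mul]
  rw [Finset.sum_comm]

/-- **The history state is annihilated by the propagation Hamiltonian**:
for unitaries `U_1, …, U_L` and any unit vector `ξ`, the history state
`|ψ_hist⟩ = (L+1)^{−1/2} Σ_{t=0}^L (U_t ⋯ U_1 ξ) ⊗ |t⟩` satisfies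
`H_prop |ψ_hist⟩ = 0` where `H_prop = Σ_{t=1}^L H_t`. -/
theorem history_state_in_kernel (L : ℕ) (U : Fin L → Matrix ι ι ℂ)
    (hU : ∀ i, (U i)ᴴ * U i = 1) (hU' : ∀ i, U i * (U i)ᴴ = 1)
    (ξ : ι → ℂ) (hξ : star ξ ⬝ᵥ ξ = 1) :
    (∑ i : Fin L, FKterm L (U i) i).mulVec
      (fun p : ι × Fin (L + 1) =>
        ((Real.sqrt (L + 1) : ℂ))⁻¹ * partialOutput L U ξ (p.2 : ℕ) p.1) = 0 := by
  classical
  set c : ℂ := ((Real.sqrt (L + 1) : ℂ))⁻¹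
  set ψ : ι × Fin (L + 1) → ℂ := fun p => c * partialOutput L U ξ (p.2 : ℕ) p.1 with hψ
  rw [sum_mulVec']
  refine Finset.sum_eq_zero fun i _ => ?_
  have hstep : partialOutput L U ξ ((i.succ : Fin (L+1)) : ℕ) =
      (U i).mulVec (partialOutput L U ξ ((i.castSucc : Fin (L+1)) : ℕ)) := by
    simp [partialOutput, Fin.val_succ, i.isLt]
  funext p
  obtain ⟨x, t⟩ := p
  have hne : (i.castSucc : Fin (L+1)) ≠ i.succ := (Fin.castSucc_lt_succ (i := i)).ne
  simp only [FKterm, Matrix.smul_mulVec, Matrix.add_mulVec, Matrix.sub_mulVec,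
    Matrix.neg_mulVec, Pi.smul_apply, Pi.add_apply, Pi.sub_apply, Pi.neg_apply,
    Pi.zero_apply, smul_eq_mul]
  rw [kron_std_mulVec, kron_std_mulVec, kron_std_mulVec, kron_std_mulVec]
  have hc1 : (fun y => ψ (y, i.castSucc)) = c • partialOutput L U ξ (i.castSucc : ℕ) := rfl
  have hc2 : (fun y => ψ (y, i.succ)) = c • partialOutput L U ξ ((i.succ : Fin (L+1)) : ℕ) := rfl
  by_cases h1 : t = i.succ
  · subst h1
    simp only [if_pos rfl, if_neg hne.symm, hc1, hc2, Matrix.mulVec_smul, Matrix.one_mulVec,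
      hstep, hne, if_false, Pi.smul_apply, smul_eq_mul]
    ring
  · by_cases h2 : t = i.castSucc
    · subst h2
      simp only [if_neg hne, if_pos rfl, hc1, hc2, Matrix.mulVec_smul, Matrix.one_mulVec,
        hstep, if_neg h1, Matrix.mulVec_mulVec, hU i, Pi.smul_apply, smul_eq_mul]
      ring
    · simp [h1, h2]
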